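/- For every natural number p > 2, the real polynomial 𝒳_p(x) = x^{p+1}(x² − x − 1) + x² satisfies 𝒳_p(1) = 0 and 𝒳_p′(1) = 2 − p < 0, and possesses a real root λ with 1 < λ < (1+√5)/2. -/

import Mathlib

/-- For every natural `p > 2`, the real polynomial `𝒳_p(x) = x^(p+1)(x²−x−1) + x²`
satisfies `𝒳_p(1) = 0`, `𝒳_p'(1) = 2 − p < 0`, and has a real root `λ` with
`1 < λ < (1+√5)/2`. -/
theorem stmt2 (p : ℕ) (hp : 2 < p) (Xp : ℝ → ℝ)
    (hXp : ∀ x : ℝ, Xp x = x ^ (p + 1) * (x ^ 2 - x - 1) + x ^ 2) :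
    Xp 1 = 0 ∧ deriv Xp 1 = 2 - (p : ℝ) ∧ deriv Xp 1 < 0 ∧
      ∃ lam : ℝ, 1 < lam ∧ lam < (1 + Real.sqrt 5) / 2 ∧ Xp lam = 0 := by
  have hfun : Xp = fun x : ℝ => x ^ (p + 1) * (x ^ 2 - x - 1) + x ^ 2 := funext hXp
  have h1 : Xp 1 = 0 := by rw [hXp]; ring
  -- derivative at 1
  have hd : HasDerivAt Xp (2 - (p : ℝ)) 1 := by
    rw [hfun]
    have h2 : HasDerivAt (fun x : ℝ => x ^ 2 - x - 1)
        ((2 : ℕ) * (1:ℝ) ^ (2 - 1) - 1 - 0) 1 :=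
      ((hasDerivAt_pow 2 (1:ℝ)).sub (hasDerivAt_id 1)).sub (hasDerivAt_const 1 1)
    have h3 := ((hasDerivAt_pow (p + 1) (1:ℝ)).mul h2).add (hasDerivAt_pow 2 (1:ℝ))
    simp only [Pi.mul_def, Pi.add_def] at h3
    refine h3.congr_deriv ?_
    push_cast
    ring
  have hderiv : deriv Xp 1 = 2 - (p : ℝ) := hd.deriv
  have hneg : deriv Xp 1 < 0 := by
    rw [hderiv]
    have : (2 : ℝ) < (p : ℝ) := by exact_mod_cast hp
    linarith
  refine ⟨h1, hderiv, hneg, ?_⟩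
  -- golden ratio
  set φ : ℝ := (1 + Real.sqrt 5) / 2 with hφdef
  have hs5 : Real.sqrt 5 ^ 2 = 5 := Real.sq_sqrt (by norm_num)
  have hs5pos : (2 : ℝ) < Real.sqrt 5 := by
    nlinarith [Real.sqrt_nonneg 5]
  have hφeq : φ ^ 2 - φ - 1 = 0 := by
    rw [hφdef]; nlinarith [hs5]
  have ha : Xp 1.1 < 0 := by
    rw [hXp]
    have hpow : (1.1 : ℝ) ^ 4 ≤ (1.1 : ℝ) ^ (p + 1) := by
      apply pow_le_pow_right₀ (by norm_num)
      omega
    nlinarith [hpow]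
  have hb : Xp φ > 0 := by
    rw [hXp, hφeq]
    have hφpos : 0 < φ := by rw [hφdef]; nlinarith
    positivity
  have hcont : ContinuousOn Xp (Set.Icc (1.1 : ℝ) φ) := by
    rw [hfun]; fun_prop
  have hle : (1.1 : ℝ) ≤ φ := by rw [hφdef]; nlinarith
  have : (0 : ℝ) ∈ Set.Icc (Xp 1.1) (Xp φ) := ⟨le_of_lt ha, le_of_lt hb⟩
  obtain ⟨lam, hlam, hXlam⟩ := intermediate_value_Icc hle hcont this
  refine ⟨lam, by linarith [hlam.1], ?_, hXlam⟩
  rcases lt_or_eq_of_le hlam.2 with h | h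
  · exact h
  · exfalso; rw [h] at hXlam; linarith [hb, hXlam]
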